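/- Let R be a PVMD with Spec_t(R) Noetherian and let I be a t-ideal of R. If I is a primary ideal which is not prime, then I⁻¹ is not a subring of the quotient field K. -/

import Mathlib

/-!
Common definitions: star operations (`v`- and `t`-closure), `t`-ideals, `t`-invertibility,
PVMDs, overrings, `t`-linked and `t`-flat overrings, localizations inside the quotient
field, Nagata and Kaplansky transforms, endomorphism rings of ideals.
-/

open scoped Classical

namespace PVMDPaper

noncomputable section

section Generic

variable (A : Type*) [CommRing A] (K : Type*) [Field K] [Algebra A K]

/-- The image of an integral ideal of `A` inside the field `K`, as an `A`-submodule of `K`. -/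
def toK (I : Ideal A) : Submodule A K := Submodule.map (Algebra.linearMap A K) I

variable {A K}

/-- The dual `I⁻¹ = (A : I) = {x ∈ K : x I ⊆ A}` of a submodule of `K`. -/
def dual (I : Submodule A K) : Submodule A K := 1 / I

/-- The `v`-closure `I_v = (I⁻¹)⁻¹`. -/
def vOp (I : Submodule A K) : Submodule A K := 1 / (1 / I)

/-- The `t`-closure `I_t`: the union of `J_v` where `J` ranges over the nonzero finitely
generated submodules `J ≤ I` (the union of this directed family is its supremum). -/
def tOp (I : Submodule A K) : Submodule A K :=
  sSup {V | ∃ J : Submodule A K, J ≠ ⊥ ∧ J.FG ∧ J ≤ I ∧ V = vOp J}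

variable (K)

/-- An (integral) ideal `I` of `A` is a `t`-ideal if `I = I_t`. -/
def IsTIdeal (I : Ideal A) : Prop := tOp (toK A K I) = toK A K I

/-- An ideal `I` is `t`-invertible if `(I I⁻¹)_t = A`. -/
def IsTInvertible (I : Ideal A) : Prop := tOp (toK A K I * dual (toK A K I)) = 1

/-- A `t`-maximal ideal: an ideal maximal in the set of proper integral `t`-ideals. -/
def IsTMaximal (M : Ideal A) : Prop :=
  M ≠ ⊤ ∧ IsTIdeal K M ∧ ∀ J : Ideal A, J ≠ ⊤ → IsTIdeal K J → M ≤ J → J = M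

variable (A)

/-- `A` is a Prüfer `v`-multiplication domain: every nonzero finitely generated ideal
is `t`-invertible. -/
def IsPVMD : Prop := ∀ I : Ideal A, I ≠ ⊥ → I.FG → IsTInvertible K I

/-- `Spec_t(A)` is Noetherian: the ascending chain condition on radical `t`-ideals. -/
def TSpecNoetherian : Prop :=
  ∀ f : ℕ →o Ideal A, (∀ n, IsTIdeal K (f n) ∧ (f n).radical = f n) →
    ∃ n, ∀ m, n ≤ m → f m = f n

variable {A K}

/-- A submodule of `K` is a subring of `K` iff it contains `1` and is closed under
multiplication (being an additive subgroup already). -/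
def IsSubringOf (S : Submodule A K) : Prop :=
  (1 : K) ∈ S ∧ ∀ x ∈ S, ∀ y ∈ S, x * y ∈ S

variable (K)

/-- The localization `A_P = {a/s : a ∈ A, s ∈ A ∖ P}` viewed as a subset of `K`. -/
def loc (P : Ideal A) : Set K :=
  {x | ∃ a s : A, s ∉ P ∧ x * algebraMap A K s = algebraMap A K a}

/-- The set `J A_P = {a/s : a ∈ J, s ∈ A ∖ P} ⊆ K`. -/
def locIdealAt (J P : Ideal A) : Set K :=
  {x | ∃ a ∈ J, ∃ s : A, s ∉ P ∧ x * algebraMap A K s = algebraMap A K a}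

/-- `Z(A, I)`: the set of zero divisors on `A/I`. -/
def ZSet (I : Ideal A) : Set A := {x | ∃ a : A, a ∉ I ∧ x * a ∈ I}

/-- `Q` is a maximal prime ideal of `Z(A,I)`: a prime contained in `Z(A,I)`, maximal
(under inclusion) among the primes contained in `Z(A,I)`. -/
def MaxPrimeOfZ (I Q : Ideal A) : Prop :=
  Q.IsPrime ∧ (Q : Set A) ⊆ ZSet I ∧
    ∀ Q' : Ideal A, Q'.IsPrime → (Q' : Set A) ⊆ ZSet I → Q ≤ Q' → Q' = Q

end Generic

section Overring

variable {R : Type*} [CommRing R] [IsDomain R]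
variable {K : Type*} [Field K] [Algebra R K] [IsFractionRing R K]

/-- The extension `IT` of an ideal `I` of `R` to an overring `T`, as a `T`-submodule of `K`. -/
def extendI (I : Ideal R) (T : Subalgebra R K) : Submodule T K :=
  Submodule.span T (algebraMap R K '' (I : Set R))

/-- The extension `IT` of an `R`-submodule `I` of `K` to an overring `T`. -/
def extendS (I : Submodule R K) (T : Subalgebra R K) : Submodule T K :=
  Submodule.span T (I : Set K)

/-- An overring `T` of `R` is `t`-linked over `R` if `(IT)⁻¹ = T` for each finitely
generated ideal `I` of `R` with `I⁻¹ = R`. -/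
def IsTLinked (T : Subalgebra R K) : Prop :=
  ∀ I : Ideal R, I.FG → dual (toK R K I) = 1 → dual (extendI I T) = 1

/-- An overring `T` of `R` is `t`-flat over `R` if `T_M = R_{M ∩ R}` for each
`t`-maximal ideal `M` of `T`. -/
def IsTFlat (T : Subalgebra R K) : Prop :=
  ∀ M : Ideal T, IsTMaximal K M → loc K M = loc K (M.comap (algebraMap R T))

variable (R K)

/-- `R` is a `tQR`-domain: a PVMD all of whose `t`-linked overrings are localizations
of `R` at multiplicative sets. -/
def IsTQR : Prop :=
  IsPVMD R K ∧ ∀ T : Subalgebra R K, IsTLinked T → ∃ S : Submonoid R,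
    (T : Set K) = {x | ∃ a : R, ∃ s ∈ S, x * algebraMap R K s = algebraMap R K a}

variable {R K}
variable (K)

/-- The endomorphism ring `(I : I) = {x ∈ K : x I ⊆ I}` of an ideal `I`, as an
overring of `R`. -/
def endoRing (I : Ideal R) : Subalgebra R K where
  carrier := {x : K | ∀ y ∈ toK R K I, x * y ∈ toK R K I}
  mul_mem' := by
    intro a b ha hb y hy
    rw [mul_assoc]
    exact ha _ (hb _ hy)
  one_mem' := by
    intro y hy
    rwa [one_mul]
  add_mem' := by
    intro a b ha hb y hy
    rw [add_mul]
    exact Submodule.add_mem _ (ha y hy) (hb y hy)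
  zero_mem' := by
    intro y hy
    rw [zero_mul]
    exact Submodule.zero_mem _
  algebraMap_mem' := by
    intro r y hy
    rw [← Algebra.smul_def]
    exact Submodule.smul_mem _ r hy

set_option synthInstance.maxHeartbeats 400000 in
/-- The ideal `I`, viewed as an ideal of its endomorphism ring `(I : I)`. -/
def idealInEndo (I : Ideal R) : Ideal (endoRing K I) where
  carrier := {x | (x : K) ∈ toK R K I}
  add_mem' := by
    intro a b ha hb
    simp only [Set.mem_setOf_eq] at *
    rw [AddMemClass.coe_add]
    exact Submodule.add_mem _ ha hb
  zero_mem' := by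
    simp only [Set.mem_setOf_eq, ZeroMemClass.coe_zero]
    exact Submodule.zero_mem _
  smul_mem' := by
    intro c x hx
    simp only [Set.mem_setOf_eq] at *
    rw [smul_eq_mul, MulMemClass.coe_mul]
    exact c.2 _ hx

/-- The Kaplansky transform `Ω(I) = {u ∈ K : ∀ a ∈ I, ∃ n ≥ 1, u aⁿ ∈ R}`, as an
overring of `R`. -/
def kaplansky (I : Ideal R) : Subalgebra R K where
  carrier := {u : K | ∀ a ∈ I, ∃ n : ℕ, 0 < n ∧
    ∃ r : R, u * (algebraMap R K a) ^ n = algebraMap R K r}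
  mul_mem' := by
    intro u v hu hv a ha
    obtain ⟨n, hn, r, hr⟩ := hu a ha
    obtain ⟨m, hm, s, hs⟩ := hv a ha
    refine ⟨n + m, by omega, r * s, ?_⟩
    rw [map_mul, ← hr, ← hs, pow_add]
    ring
  one_mem' := by
    intro a ha
    exact ⟨1, one_pos, a, by rw [pow_one, one_mul]⟩
  add_mem' := by
    intro u v hu hv a ha
    obtain ⟨n, hn, r, hr⟩ := hu a ha
    obtain ⟨m, hm, s, hs⟩ := hv a ha
    refine ⟨n + m, by omega, r * a ^ m + s * a ^ n, ?_⟩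
    rw [map_add, map_mul, map_mul, map_pow, map_pow, ← hr, ← hs, pow_add, add_mul]
    ring
  zero_mem' := by
    intro a ha
    exact ⟨1, one_pos, 0, by rw [map_zero, zero_mul]⟩
  algebraMap_mem' := by
    intro r a ha
    exact ⟨1, one_pos, r * a, by rw [map_mul, pow_one]⟩

/-- The Nagata (ideal) transform `T(I) = ⋃_{n ≥ 1} (R : Iⁿ)`, as an overring of `R`. -/
def nagata (I : Ideal R) : Subalgebra R K where
  carrier := {x : K | ∃ n : ℕ, ∀ y ∈ I ^ (n + 1),
    ∃ r : R, x * algebraMap R K y = algebraMap R K r}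
  mul_mem' := by
    intro x x' hx hx'
    obtain ⟨n, hn⟩ := hx
    obtain ⟨m, hm⟩ := hx'
    refine ⟨n + m + 1, fun y hy => ?_⟩
    rw [show n + m + 1 + 1 = (n + 1) + (m + 1) by omega, pow_add] at hy
    refine Submodule.mul_induction_on hy ?_ ?_
    · intro a ha b hb
      obtain ⟨r, hr⟩ := hn a ha
      obtain ⟨s, hs⟩ := hm b hb
      refine ⟨r * s, ?_⟩
      rw [map_mul, map_mul, ← hr, ← hs]
      ring
    · rintro y1 y2 ⟨r1, h1⟩ ⟨r2, h2⟩
      exact ⟨r1 + r2, by rw [map_add, map_add, mul_add, h1, h2]⟩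
  one_mem' := ⟨0, fun y _ => ⟨y, by rw [one_mul]⟩⟩
  add_mem' := by
    intro x x' hx hx'
    obtain ⟨n, hn⟩ := hx
    obtain ⟨m, hm⟩ := hx'
    refine ⟨n + m + 1, fun y hy => ?_⟩
    have h1 : y ∈ I ^ (n + 1) := Ideal.pow_le_pow_right (by omega) hy
    have h2 : y ∈ I ^ (m + 1) := Ideal.pow_le_pow_right (by omega) hy
    obtain ⟨r, hr⟩ := hn y h1
    obtain ⟨s, hs⟩ := hm y h2
    exact ⟨r + s, by rw [map_add, add_mul, hr, hs]⟩
  zero_mem' := ⟨0, fun y _ => ⟨0, by rw [map_zero, zero_mul]⟩⟩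
  algebraMap_mem' := by
    intro r
    exact ⟨0, fun y _ => ⟨r * y, by rw [map_mul]⟩⟩

end Overring

section Helpers

set_option linter.unusedSectionVars false

variable {R : Type*} [CommRing R] [IsDomain R]
variable {K : Type*} [Field K] [Algebra R K] [IsFractionRing R K]

lemma algK_inj : Function.Injective (algebraMap R K) := IsFractionRing.injective R K

lemma mem_one_iff {x : K} : x ∈ (1 : Submodule R K) ↔ ∃ r : R, algebraMap R K r = x := by
  rw [Submodule.one_eq_range]
  exact LinearMap.mem_range

lemma mem_toK {I : Ideal R} {x : K} :
    x ∈ toK R K I ↔ ∃ a ∈ I, algebraMap R K a = x := by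
  simp [toK, Submodule.mem_map, Algebra.linearMap_apply]

lemma toK_mem {I : Ideal R} {a : R} (ha : a ∈ I) : algebraMap R K a ∈ toK R K I :=
  mem_toK.mpr ⟨a, ha, rfl⟩

lemma toK_le_one (I : Ideal R) : toK R K I ≤ 1 := by
  intro x hx
  obtain ⟨a, _, rfl⟩ := mem_toK.mp hx
  exact mem_one_iff.mpr ⟨a, rfl⟩

lemma toK_mono {I J : Ideal R} (h : I ≤ J) : toK R K I ≤ toK R K J :=
  Submodule.map_mono h

lemma toK_le_toK_iff {I J : Ideal R} : toK R K I ≤ toK R K J ↔ I ≤ J := by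
  constructor
  · intro h a ha
    obtain ⟨b, hb, hba⟩ := mem_toK.mp (h (toK_mem ha))
    rwa [← algK_inj hba]
  · exact toK_mono

lemma toK_mul (I J : Ideal R) : toK R K (I * J) = toK R K I * toK R K J := by
  have : Algebra.linearMap R K = (Algebra.ofId R K).toLinearMap := rfl
  simp only [toK, this]
  exact Submodule.map_mul I J (Algebra.ofId R K)

lemma toK_pow (I : Ideal R) (n : ℕ) : toK R K (I ^ n) = (toK R K I) ^ n := by
  induction n with
  | zero =>
    simp only [pow_zero]
    apply le_antisymm (toK_le_one _)
    intro x hx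
    obtain ⟨r, rfl⟩ := mem_one_iff.mp hx
    exact toK_mem (by rw [Ideal.one_eq_top]; trivial)
  | succ n ih => rw [pow_succ, pow_succ, toK_mul, ih]

/-! ### v-operation basics -/

lemma le_vOp (A : Submodule R K) : A ≤ vOp A := by
  intro x hx
  rw [vOp, Submodule.mem_div_iff_forall_mul_mem]
  intro y hy
  rw [Submodule.mem_div_iff_forall_mul_mem] at hy
  rw [mul_comm]
  exact hy x hx

lemma div_anti {A B C : Submodule R K} (h : A ≤ B) : C / B ≤ C / A := by
  intro x hx
  rw [Submodule.mem_div_iff_forall_mul_mem] at hx ⊢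
  exact fun y hy => hx y (h hy)

lemma vOp_mono {A B : Submodule R K} (h : A ≤ B) : vOp A ≤ vOp B :=
  div_anti (div_anti h)

lemma one_div_one : (1 : Submodule R K) / 1 = 1 := by
  apply le_antisymm
  · intro x hx
    rw [Submodule.mem_div_iff_forall_mul_mem] at hx
    simpa using hx 1 (Submodule.one_le.mp le_rfl)
  · intro x hx
    rw [Submodule.mem_div_iff_forall_mul_mem]
    intro y hy
    simpa using Submodule.mul_mem_mul hx hy

lemma vOp_one : vOp (1 : Submodule R K) = 1 := by
  simp only [vOp]
  rw [one_div_one, one_div_one]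

lemma one_div_one_div_one_div (A : Submodule R K) : 1 / (1 / (1 / A)) = 1 / A := by
  apply le_antisymm
  · exact div_anti (le_vOp A)
  · exact le_vOp (1 / A)

lemma vOp_idem (A : Submodule R K) : vOp (vOp A) = vOp A := by
  simp only [vOp]
  rw [one_div_one_div_one_div]

lemma vOp_mul_le (A B : Submodule R K) : vOp A * B ≤ vOp (A * B) := by
  rw [Submodule.mul_le]
  intro x hx y hy
  rw [vOp, Submodule.mem_div_iff_forall_mul_mem]
  intro t ht
  rw [Submodule.mem_div_iff_forall_mul_mem] at ht
  have hyt : y * t ∈ 1 / A := by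
    rw [Submodule.mem_div_iff_forall_mul_mem]
    intro a ha
    have h2 := ht (a * y) (Submodule.mul_mem_mul ha hy)
    have e : y * t * a = t * (a * y) := by ring
    rwa [e]
  rw [vOp, Submodule.mem_div_iff_forall_mul_mem] at hx
  have := hx (y * t) hyt
  rwa [← mul_assoc] at this

lemma vOp_mul_vOp_le (A B : Submodule R K) : vOp A * vOp B ≤ vOp (A * B) := by
  calc vOp A * vOp B = vOp B * vOp A := mul_comm _ _
    _ ≤ vOp (B * vOp A) := vOp_mul_le _ _
    _ = vOp (vOp A * B) := by rw [mul_comm]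
    _ ≤ vOp (vOp (A * B)) := vOp_mono (vOp_mul_le _ _)
    _ = vOp (A * B) := vOp_idem _

lemma vOp_pow_le (A : Submodule R K) (n : ℕ) (hn : 1 ≤ n) : (vOp A) ^ n ≤ vOp (A ^ n) := by
  induction n with
  | zero => omega
  | succ n ih =>
    rcases Nat.eq_or_lt_of_le hn with h | h
    · simp [← h]
    · have hn' : 1 ≤ n := by omega
      calc (vOp A) ^ (n + 1) = (vOp A) ^ n * vOp A := pow_succ _ _
        _ ≤ vOp (A ^ n) * vOp A := mul_le_mul' (ih hn') le_rfl
        _ ≤ vOp (A ^ n * A) := vOp_mul_vOp_le _ _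
        _ = vOp (A ^ (n + 1)) := by rw [pow_succ]

lemma vOp_le_one {A : Submodule R K} (h : A ≤ 1) : vOp A ≤ 1 := by
  have := vOp_mono h
  rwa [vOp_one] at this

/-! ### t-operation basics -/

lemma vOp_le_tOp {A J : Submodule R K} (hJ : J ≠ ⊥) (hfg : J.FG) (hle : J ≤ A) :
    vOp J ≤ tOp A :=
  le_sSup ⟨J, hJ, hfg, hle, rfl⟩

lemma tOp_le_iff {A B : Submodule R K} :
    tOp A ≤ B ↔ ∀ J : Submodule R K, J ≠ ⊥ → J.FG → J ≤ A → vOp J ≤ B := by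
  constructor
  · intro h J h1 h2 h3
    exact le_trans (vOp_le_tOp h1 h2 h3) h
  · intro h
    apply sSup_le
    rintro V ⟨J, h1, h2, h3, rfl⟩
    exact h J h1 h2 h3

lemma le_tOp (A : Submodule R K) : A ≤ tOp A := by
  intro x hx
  by_cases hx0 : x = 0
  · simp [hx0]
  · have hJ : Submodule.span R {x} ≠ ⊥ := by
      simp [Submodule.span_singleton_eq_bot, hx0]
    refine vOp_le_tOp hJ (Submodule.fg_span_singleton x) ?_ ?_
    · rwa [Submodule.span_singleton_le_iff_mem]
    · exact le_vOp _ (Submodule.mem_span_singleton_self x)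

lemma mem_tOp_iff {A : Submodule R K} {x : K} :
    x ∈ tOp A ↔ x = 0 ∨ ∃ J : Submodule R K, J ≠ ⊥ ∧ J.FG ∧ J ≤ A ∧ x ∈ vOp J := by
  constructor
  · intro hx
    by_cases h0 : x = 0
    · exact Or.inl h0
    right
    set S : Set (Submodule R K) := {V | ∃ J : Submodule R K, J ≠ ⊥ ∧ J.FG ∧ J ≤ A ∧ V = vOp J}
      with hS
    rcases Set.eq_empty_or_nonempty S with hemp | hne
    · rw [tOp, ← hS, hemp] at hx
      simp at hx
      exact absurd hx h0
    · have hdir : DirectedOn (· ≤ ·) S := by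
        rintro V₁ ⟨J₁, hb₁, hf₁, hl₁, rfl⟩ V₂ ⟨J₂, hb₂, hf₂, hl₂, rfl⟩
        refine ⟨vOp (J₁ ⊔ J₂), ⟨J₁ ⊔ J₂, ?_, hf₁.sup hf₂, sup_le hl₁ hl₂, rfl⟩,
          vOp_mono le_sup_left, vOp_mono le_sup_right⟩
        simp only [ne_eq, sup_eq_bot_iff]
        tauto
      rw [tOp, ← hS] at hx
      obtain ⟨V, ⟨J, h1, h2, h3, rfl⟩, hxV⟩ := (Submodule.mem_sSup_of_directed hne hdir).mp hx
      exact ⟨J, h1, h2, h3, hxV⟩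
  · rintro (rfl | ⟨J, h1, h2, h3, h4⟩)
    · exact (tOp A).zero_mem
    · exact vOp_le_tOp h1 h2 h3 h4

lemma tOp_mono {A B : Submodule R K} (h : A ≤ B) : tOp A ≤ tOp B := by
  rw [tOp_le_iff]
  intro J h1 h2 h3
  exact vOp_le_tOp h1 h2 (le_trans h3 h)

lemma tOp_le_one {A : Submodule R K} (h : A ≤ 1) : tOp A ≤ 1 := by
  rw [tOp_le_iff]
  intro J _ _ hle
  exact vOp_le_one (le_trans hle h)

lemma tOp_one : tOp (1 : Submodule R K) = 1 :=
  le_antisymm (tOp_le_one le_rfl) (le_tOp 1)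

lemma tOp_idem (A : Submodule R K) : tOp (tOp A) = tOp A := by
  refine le_antisymm ?_ (le_tOp _)
  by_cases hA : A = ⊥
  · subst hA
    have : tOp (⊥ : Submodule R K) = ⊥ := by
      apply le_antisymm ?_ bot_le
      rw [tOp_le_iff]
      intro J h1 _ h3
      exact absurd (le_bot_iff.mp h3) h1
    rw [this]
    exact this.le
  · obtain ⟨a, haA, ha0⟩ := Submodule.exists_mem_ne_zero_of_ne_bot hA
    rw [tOp_le_iff]
    intro J hJb hJf hJle
    obtain ⟨T, rfl⟩ := hJf
    -- each element of T lies in some vOp J' with J' fg ≤ A; take sup with span{a}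
    have key : ∀ x : K, x ∈ T → ∃ J' : Submodule R K,
        J' ≠ ⊥ ∧ J'.FG ∧ J' ≤ A ∧ x ∈ vOp J' := by
      intro x hxT
      have hx : x ∈ tOp A := hJle (Submodule.subset_span (Finset.mem_coe.mpr hxT))
      rcases mem_tOp_iff.mp hx with rfl | h
      · exact ⟨Submodule.span R {a}, by simp [Submodule.span_singleton_eq_bot, ha0],
          Submodule.fg_span_singleton a, by rwa [Submodule.span_singleton_le_iff_mem],
          (vOp _).zero_mem⟩
      · exact h
    choose f hf1 hf2 hf3 hf4 using key
    set Jstar : Submodule R K :=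
      (Submodule.span R {a}) ⊔ T.attach.sup (fun x => f x.1 x.2) with hJstar
    have hJstarb : Jstar ≠ ⊥ := by
      intro hc
      rw [hJstar] at hc
      rw [sup_eq_bot_iff] at hc
      rw [Submodule.span_singleton_eq_bot] at hc
      exact ha0 hc.1
    have hJstarf : Jstar.FG := by
      apply Submodule.FG.sup (Submodule.fg_span_singleton a)
      clear hJstar
      induction T.attach using Finset.induction_on with
      | empty => simp [Submodule.fg_bot]
      | insert h _ _ ih => rw [Finset.sup_insert]; exact Submodule.FG.sup (hf2 _ _) ih
    have hJstarle : Jstar ≤ A := by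
      rw [hJstar]
      apply sup_le
      · rwa [Submodule.span_singleton_le_iff_mem]
      · apply Finset.sup_le
        intro x _
        exact hf3 x.1 x.2
    have hJle' : Submodule.span R (T : Set K) ≤ vOp Jstar := by
      rw [Submodule.span_le]
      intro x hxT
      have hxT' : x ∈ T := Finset.mem_coe.mp hxT
      have : f x hxT' ≤ Jstar := by
        rw [hJstar]
        exact le_trans (Finset.le_sup (f := fun (y : {y // y ∈ T}) => f y.1 y.2)
          (Finset.mem_attach T ⟨x, hxT'⟩)) le_sup_right
      exact vOp_mono this (hf4 x hxT')
    calc vOp (Submodule.span R (T : Set K)) ≤ vOp (vOp Jstar) := vOp_mono hJle'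
      _ = vOp Jstar := vOp_idem _
      _ ≤ tOp A := vOp_le_tOp hJstarb hJstarf hJstarle

lemma tOp_mul_tOp_le (A B : Submodule R K) : tOp A * tOp B ≤ tOp (A * B) := by
  rw [Submodule.mul_le]
  intro x hx y hy
  rcases mem_tOp_iff.mp hx with rfl | ⟨J₁, hb₁, hf₁, hl₁, hx₁⟩
  · simp
  rcases mem_tOp_iff.mp hy with rfl | ⟨J₂, hb₂, hf₂, hl₂, hy₂⟩
  · simp
  have hJb : J₁ * J₂ ≠ ⊥ := by
    obtain ⟨a, haJ, ha0⟩ := Submodule.exists_mem_ne_zero_of_ne_bot hb₁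
    obtain ⟨b, hbJ, hb0⟩ := Submodule.exists_mem_ne_zero_of_ne_bot hb₂
    intro hc
    have : a * b ∈ J₁ * J₂ := Submodule.mul_mem_mul haJ hbJ
    rw [hc] at this
    simp only [Submodule.mem_bot] at this
    exact (mul_ne_zero ha0 hb0) this
  have := Submodule.mul_mem_mul hx₁ hy₂
  have hle := vOp_mul_vOp_le J₁ J₂
  exact vOp_le_tOp hJb (hf₁.mul hf₂) (mul_le_mul' hl₁ hl₂) (hle this)

/-! ### Ideal-level t-closure -/

variable (K)

/-- The `t`-closure of an ideal, as an ideal. -/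
def tCl (I : Ideal R) : Ideal R :=
  Submodule.comap (Algebra.linearMap R K) (tOp (toK R K I))

variable {K}

lemma toK_top : toK R K (⊤ : Ideal R) = 1 := by
  apply le_antisymm (toK_le_one _)
  intro x hx
  obtain ⟨r, rfl⟩ := mem_one_iff.mp hx
  exact toK_mem Submodule.mem_top

lemma toK_tCl (I : Ideal R) : toK R K (tCl K I) = tOp (toK R K I) := by
  apply le_antisymm
  · intro x hx
    obtain ⟨a, ha, rfl⟩ := mem_toK.mp hx
    exact ha
  · intro x hx
    have hx1 : x ∈ (1 : Submodule R K) := tOp_le_one (toK_le_one I) hx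
    obtain ⟨r, rfl⟩ := mem_one_iff.mp hx1
    exact toK_mem hx

lemma le_tCl (I : Ideal R) : I ≤ tCl K I := by
  intro a ha
  exact le_tOp _ (toK_mem ha)

lemma tCl_isT (I : Ideal R) : IsTIdeal K (tCl K I) := by
  unfold IsTIdeal
  rw [toK_tCl, tOp_idem]

lemma tCl_le_of_le {I J : Ideal R} (hJ : IsTIdeal K J) (h : I ≤ J) : tCl K I ≤ J := by
  intro a ha
  have : algebraMap R K a ∈ tOp (toK R K I) := ha
  have h2 : algebraMap R K a ∈ toK R K J := by
    rw [← hJ]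
    exact tOp_mono (toK_mono h) this
  obtain ⟨b, hb, hba⟩ := mem_toK.mp h2
  rwa [← algK_inj hba]

lemma tCl_mono {I J : Ideal R} (h : I ≤ J) : tCl K I ≤ tCl K J :=
  Submodule.comap_mono (tOp_mono (toK_mono h))

lemma one_mem_toK_iff {I : Ideal R} : (1 : K) ∈ toK R K I ↔ I = ⊤ := by
  constructor
  · intro h
    obtain ⟨a, ha, haI⟩ := mem_toK.mp h
    have : a = 1 := algK_inj (by rw [haI, map_one])
    subst this
    exact Ideal.eq_top_iff_one I |>.mpr ha
  · rintro rfl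
    exact mem_toK.mpr ⟨1, Submodule.mem_top, map_one _⟩

/-- The radical of a `t`-ideal is a `t`-ideal. -/
lemma isT_radical {I : Ideal R} (h : IsTIdeal K I) : IsTIdeal K I.radical := by
  apply le_antisymm _ (le_tOp _)
  rw [tOp_le_iff]
  intro J hJb hJfg hJle
  obtain ⟨T, rfl⟩ := hJfg
  -- build an ideal J' with span T ≤ toK J'
  have key : ∀ x : K, x ∈ T → ∃ a : R, a ∈ I.radical ∧ algebraMap R K a = x := by
    intro x hx
    have := hJle (Submodule.subset_span (Finset.mem_coe.mpr hx))
    obtain ⟨a, ha, rfl⟩ := mem_toK.mp this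
    exact ⟨a, ha, rfl⟩
  choose f hf1 hf2 using key
  set J' : Ideal R := Ideal.span (Set.range (fun x : {x // x ∈ T} => f x.1 x.2)) with hJ'
  have hJ'fg : J'.FG := Submodule.fg_span (Set.finite_range _)
  have hJ'le : J' ≤ I.radical := by
    rw [hJ', Ideal.span_le]
    rintro _ ⟨x, rfl⟩
    exact hf1 x.1 x.2
  have hJle' : Submodule.span R (T : Set K) ≤ toK R K J' := by
    rw [Submodule.span_le]
    intro x hx
    have hx' : x ∈ T := Finset.mem_coe.mp hx
    rw [← hf2 x hx']
    exact toK_mem (Ideal.subset_span ⟨⟨x, hx'⟩, rfl⟩)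
  have hJ'b : J' ≠ ⊥ := by
    intro hc
    rw [hc] at hJ'le hJle'
    have : Submodule.span R (T : Set K) ≤ ⊥ := by
      refine le_trans hJle' ?_
      intro y hy
      obtain ⟨a, ha, rfl⟩ := mem_toK.mp hy
      simp only [Ideal.mem_bot] at ha
      simp [ha]
    exact hJb (le_bot_iff.mp this)
  obtain ⟨N₁, hN₁⟩ := Ideal.exists_pow_le_of_le_radical_of_fg hJ'le hJ'fg
  set N := max N₁ 1 with hN
  have hN1 : 1 ≤ N := le_max_right _ _
  have hNle : J' ^ N ≤ I := le_trans (Ideal.pow_le_pow_right (le_max_left _ _)) hN₁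
  have hJ'Nb : J' ^ N ≠ ⊥ := by
    obtain ⟨a, haJ, ha0⟩ := Submodule.exists_mem_ne_zero_of_ne_bot hJ'b
    intro hc
    have : a ^ N ∈ J' ^ N := Ideal.pow_mem_pow haJ N
    rw [hc] at this
    exact pow_ne_zero N ha0 (by simpa using this)
  have htoKb : toK R K (J' ^ N) ≠ ⊥ := by
    obtain ⟨a, haJ, ha0⟩ := Submodule.exists_mem_ne_zero_of_ne_bot hJ'Nb
    intro hc
    have : algebraMap R K a ∈ toK R K (J' ^ N) := toK_mem haJ
    rw [hc] at this
    simp only [Submodule.mem_bot] at this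
    exact ha0 (algK_inj (by rw [this, map_zero]))
  have hfin : vOp (toK R K (J' ^ N)) ≤ toK R K I :=
    le_trans (vOp_le_tOp htoKb (Submodule.FG.map _ (Submodule.FG.pow hJ'fg N)) (toK_mono hNle)) (le_of_eq h)
  intro x hx
  have hx' : x ∈ vOp (toK R K J') := vOp_mono hJle' hx
  have hxpow : x ^ N ∈ vOp (toK R K (J' ^ N)) := by
    have h1 : x ^ N ∈ (vOp (toK R K J')) ^ N := Submodule.pow_mem_pow _ hx' N
    have h2 := vOp_pow_le (toK R K J') N hN1
    have h3 : (toK R K J') ^ N = toK R K (J' ^ N) := (toK_pow J' N).symm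
    rw [← h3]
    exact h2 h1
  have hx1 : x ∈ (1 : Submodule R K) := vOp_le_one (toK_le_one J') hx'
  obtain ⟨r, rfl⟩ := mem_one_iff.mp hx1
  have : r ^ N ∈ I := by
    have := hfin hxpow
    rw [← map_pow] at this
    obtain ⟨b, hb, hbe⟩ := mem_toK.mp this
    rwa [← algK_inj hbe]
  exact toK_mem ⟨N, this⟩

/-! ### Existence of t-maximal (prime) ideals -/

lemma exists_tmax {D : Ideal R} (hD : IsTIdeal K D) (hDtop : D ≠ ⊤) :
    ∃ M : Ideal R, D ≤ M ∧ M ≠ ⊤ ∧ IsTIdeal K M ∧ M.IsPrime := by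
  set s : Set (Ideal R) := {J | IsTIdeal K J ∧ J ≠ ⊤ ∧ D ≤ J} with hs
  have hDs : D ∈ s := ⟨hD, hDtop, le_rfl⟩
  have hzorn : ∀ c ⊆ s, IsChain (· ≤ ·) c → ∀ y ∈ c, ∃ ub ∈ s, ∀ z ∈ c, z ≤ ub := by
    intro c hcs hchain y hyc
    refine ⟨sSup c, ⟨?_, ?_, le_trans (hcs hyc).2.2 (le_sSup hyc)⟩, fun z hz => le_sSup hz⟩
    · -- sSup of a chain of t-ideals is a t-ideal
      apply le_antisymm _ (le_tOp _)
      rw [tOp_le_iff]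
      intro J hJb hJfg hJle
      obtain ⟨T, rfl⟩ := hJfg
      have hdir := hchain.directedOn
      have key : ∀ T' : Finset K, Submodule.span R (T' : Set K) ≤ toK R K (sSup c) →
          ∃ z ∈ c, ∀ t : K, t ∈ T' → t ∈ toK R K z := by
        classical
        intro T'
        induction T' using Finset.induction_on with
        | empty => exact fun _ => ⟨y, hyc, by simp⟩
        | @insert a T'' ha ih =>
          intro hTle
          have hle' : Submodule.span R (T'' : Set K) ≤ toK R K (sSup c) := by
            refine le_trans ?_ hTle
            apply Submodule.span_mono
            intro t ht
            simp only [Finset.coe_insert, Set.mem_insert_iff]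
            right
            exact ht
          obtain ⟨z₁, hz₁c, hz₁⟩ := ih hle'
          have haM : a ∈ toK R K (sSup c) := hTle (Submodule.subset_span (by simp))
          obtain ⟨ra, hra, hrae⟩ := mem_toK.mp haM
          obtain ⟨z₂, hz₂c, hraz₂⟩ :=
            (Submodule.mem_sSup_of_directed ⟨y, hyc⟩ hdir).mp hra
          rcases hchain.total hz₁c hz₂c with hle | hle
          · refine ⟨z₂, hz₂c, ?_⟩
            intro t ht
            rcases Finset.mem_insert.mp ht with rfl | ht'
            · rw [← hrae]; exact toK_mem hraz₂
            · exact toK_mono hle (hz₁ t ht')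
          · refine ⟨z₁, hz₁c, ?_⟩
            intro t ht
            rcases Finset.mem_insert.mp ht with rfl | ht'
            · rw [← hrae]; exact toK_mem (hle hraz₂)
            · exact hz₁ t ht'
      obtain ⟨z, hzc, hz⟩ := key T hJle
      have hJz : Submodule.span R (T : Set K) ≤ toK R K z := by
        rw [Submodule.span_le]
        intro t ht
        exact hz t (Finset.mem_coe.mp ht)
      calc vOp (Submodule.span R (T : Set K)) ≤ tOp (toK R K z) := vOp_le_tOp hJb ⟨T, rfl⟩ hJz
        _ = toK R K z := (hcs hzc).1
        _ ≤ toK R K (sSup c) := toK_mono (le_sSup hzc)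
    · -- sSup of a chain of proper ideals is proper
      intro hc
      have h1 : (1 : R) ∈ sSup c := hc ▸ Submodule.mem_top
      obtain ⟨z, hzc, hz1⟩ := (Submodule.mem_sSup_of_directed ⟨y, hyc⟩ hchain.directedOn).mp h1
      exact (hcs hzc).2.1 ((Ideal.eq_top_iff_one z).mpr hz1)
  obtain ⟨M, hDM, hMmax⟩ := zorn_le_nonempty₀ s hzorn D hDs
  obtain ⟨hMt, hMtop, hDleM⟩ := hMmax.prop
  refine ⟨M, hDleM, hMtop, hMt, ?_⟩
  constructor
  · exact hMtop
  · intro a b hab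
    by_contra hcon
    push_neg at hcon
    obtain ⟨haM, hbM⟩ := hcon
    have key : ∀ x : R, x ∉ M → tOp (toK R K (M ⊔ Ideal.span {x})) = 1 := by
      intro x hx
      set Jx := tCl K (M ⊔ Ideal.span {x}) with hJx
      have hMJx : M ≤ Jx := le_trans le_sup_left (le_tCl (K := K) _)
      by_cases hJxtop : Jx = ⊤
      · have := toK_tCl (K := K) (M ⊔ Ideal.span {x})
        rw [← hJx, hJxtop, toK_top] at this
        exact this.symm
      · exfalso
        have hJxs : Jx ∈ s := ⟨tCl_isT _, hJxtop, le_trans hDleM hMJx⟩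
        have := hMmax.eq_of_le hJxs hMJx
        apply hx
        rw [this]
        exact le_tCl (K := K) _ (le_sup_right (a := M) (Ideal.mem_span_singleton_self x))
    have ha1 := key a haM
    have hb1 := key b hbM
    have hprod : (M ⊔ Ideal.span {a}) * (M ⊔ Ideal.span {b}) ≤ M := by
      rw [Ideal.mul_le]
      intro r hr t ht
      obtain ⟨m₁, hm₁, t₁, ht₁, rfl⟩ := Submodule.mem_sup.mp hr
      obtain ⟨m₂, hm₂, t₂, ht₂, rfl⟩ := Submodule.mem_sup.mp ht
      obtain ⟨c₁, rfl⟩ := Ideal.mem_span_singleton'.mp ht₁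
      obtain ⟨c₂, rfl⟩ := Ideal.mem_span_singleton'.mp ht₂
      have e : (m₁ + c₁ * a) * (m₂ + c₂ * b) =
          m₁ * (m₂ + c₂ * b) + m₂ * (c₁ * a) + (c₁ * c₂) * (a * b) := by ring
      rw [e]
      exact add_mem (add_mem (M.mul_mem_right _ hm₁) (M.mul_mem_right _ hm₂))
        (M.mul_mem_left _ hab)
    have : (1 : Submodule R K) ≤ toK R K M := by
      calc (1 : Submodule R K) = 1 * 1 := (one_mul 1).symm
        _ = tOp (toK R K (M ⊔ Ideal.span {a})) * tOp (toK R K (M ⊔ Ideal.span {b})) := by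
            rw [ha1, hb1]
        _ ≤ tOp (toK R K (M ⊔ Ideal.span {a}) * toK R K (M ⊔ Ideal.span {b})) :=
            tOp_mul_tOp_le _ _
        _ = tOp (toK R K ((M ⊔ Ideal.span {a}) * (M ⊔ Ideal.span {b}))) := by rw [toK_mul]
        _ ≤ tOp (toK R K M) := tOp_mono (toK_mono hprod)
        _ = toK R K M := hMt
    exact hMtop (one_mem_toK_iff.mp (this (Submodule.one_le.mp le_rfl)))

/-! ### The conductor ideal of an element of K -/

variable (K)

/-- `{r : R | r x ∈ R}`, as an ideal of `R`. -/
def multIn (x : K) : Ideal R where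
  carrier := {r : R | algebraMap R K r * x ∈ (1 : Submodule R K)}
  add_mem' := by
    intro a b ha hb
    simp only [Set.mem_setOf_eq, map_add, add_mul] at *
    exact Submodule.add_mem _ ha hb
  zero_mem' := by
    simp only [Set.mem_setOf_eq, map_zero, zero_mul]
    exact Submodule.zero_mem _
  smul_mem' := by
    intro c r hr
    simp only [Set.mem_setOf_eq, smul_eq_mul, map_mul] at *
    rw [mul_assoc, ← Algebra.smul_def]
    exact Submodule.smul_mem _ c hr

variable {K}

lemma mem_multIn {x : K} {r : R} :
    r ∈ multIn K x ↔ algebraMap R K r * x ∈ (1 : Submodule R K) := Iff.rfl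

lemma multIn_isT (x : K) : IsTIdeal K (multIn (R := R) K x) := by
  show tOp (toK R K (multIn (R := R) K x)) = toK R K (multIn (R := R) K x)
  apply le_antisymm _ (le_tOp _)
  rw [tOp_le_iff]
  intro J hJb hJfg hJle
  have hxdiv : x ∈ (1 : Submodule R K) / J := by
    rw [Submodule.mem_div_iff_forall_mul_mem]
    intro y hy
    obtain ⟨d, hd, rfl⟩ := mem_toK.mp (hJle hy)
    rw [mul_comm]
    exact mem_multIn.mp hd
  intro v hv
  have hv1 : v ∈ (1 : Submodule R K) :=
    vOp_le_one (le_trans hJle (toK_le_one _)) hv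
  obtain ⟨r, rfl⟩ := mem_one_iff.mp hv1
  apply toK_mem
  rw [mem_multIn]
  rw [vOp, Submodule.mem_div_iff_forall_mul_mem] at hv
  exact hv x hxdiv

/-! ### Comparability and local principality at prime t-ideals -/

lemma compare_at (hR : IsPVMD R K) {M : Ideal R} (hM : M.IsPrime) (hMt : IsTIdeal K M)
    (a b : R) :
    (∃ s r : R, s ∉ M ∧ s * a = b * r) ∨ (∃ s r : R, s ∉ M ∧ s * b = a * r) := by
  have h1M : (1 : R) ∉ M := fun h => hM.ne_top ((Ideal.eq_top_iff_one M).mpr h)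
  by_cases ha : a = 0
  · exact Or.inl ⟨1, 0, h1M, by rw [ha, mul_zero, mul_zero]⟩
  by_cases hb : b = 0
  · exact Or.inr ⟨1, 0, h1M, by rw [hb, mul_zero, mul_zero]⟩
  set J : Ideal R := Ideal.span {a, b} with hJ
  have hJb : J ≠ ⊥ := by
    intro hc
    apply ha
    have : a ∈ J := Ideal.subset_span (by simp)
    rw [hc] at this
    simpa using this
  have hJfg : J.FG := ⟨{a, b}, by simp [hJ]⟩
  have hinv := hR J hJb hJfg
  -- X := toK J * dual (toK J) is not contained in toK M
  have hXM : ¬ (toK R K J * dual (toK R K J) ≤ toK R K M) := by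
    intro hle
    have : (1 : Submodule R K) ≤ toK R K M := by
      calc (1 : Submodule R K) = tOp (toK R K J * dual (toK R K J)) := hinv.symm
        _ ≤ tOp (toK R K M) := tOp_mono hle
        _ = toK R K M := hMt
    exact hM.ne_top (one_mem_toK_iff.mp (this (Submodule.one_le.mp le_rfl)))
  obtain ⟨u, huX, huM⟩ := SetLike.not_le_iff_exists.mp hXM
  -- extract a single witness
  have key : u ∈ toK R K M ∨
      (∃ z ∈ dual (toK R K J), algebraMap R K a * z ∉ toK R K M) ∨
      (∃ z ∈ dual (toK R K J), algebraMap R K b * z ∉ toK R K M) := by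
    refine Submodule.mul_induction_on huX ?_ ?_
    · intro m hm z hz
      obtain ⟨j, hj, rfl⟩ := mem_toK.mp hm
      obtain ⟨ca, cb, hcab⟩ := Ideal.mem_span_pair.mp (hJ ▸ hj)
      by_cases h1 : algebraMap R K a * z ∈ toK R K M
      · by_cases h2 : algebraMap R K b * z ∈ toK R K M
        · left
          have : algebraMap R K j * z =
              ca • (algebraMap R K a * z) + cb • (algebraMap R K b * z) := by
            rw [← hcab]
            simp only [map_add, map_mul, Algebra.smul_def]
            ring
          rw [this]
          exact Submodule.add_mem _ (Submodule.smul_mem _ _ h1) (Submodule.smul_mem _ _ h2)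
        · right; right; exact ⟨z, hz, h2⟩
      · right; left; exact ⟨z, hz, h1⟩
    · rintro u₁ u₂ (h1 | h1) (h2 | h2)
      · left; exact Submodule.add_mem _ h1 h2
      · right; exact h2
      · right; exact h1
      · right; exact h1
  rcases key with hu | ⟨z, hz, hzM⟩ | ⟨z, hz, hzM⟩
  · exact absurd hu huM
  · -- a * z = s with s ∉ M ; then s * b = a * t
    have haJ : algebraMap R K a ∈ toK R K J := toK_mem (Ideal.subset_span (by simp))
    have hbJ : algebraMap R K b ∈ toK R K J := toK_mem (Ideal.subset_span (by simp))
    have hz' := Submodule.mem_div_iff_forall_mul_mem.mp hz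
    have hsa : algebraMap R K a * z ∈ (1 : Submodule R K) := by
      rw [mul_comm]; exact hz' _ haJ
    have hsb : algebraMap R K b * z ∈ (1 : Submodule R K) := by
      rw [mul_comm]; exact hz' _ hbJ
    obtain ⟨s, hs⟩ := mem_one_iff.mp hsa
    obtain ⟨t, ht⟩ := mem_one_iff.mp hsb
    have hsM : s ∉ M := by
      intro h
      exact hzM (hs ▸ toK_mem h)
    right
    refine ⟨s, t, hsM, algK_inj (R := R) (K := K) ?_⟩
    rw [map_mul, map_mul, hs, ht]
    ring
  · have haJ : algebraMap R K a ∈ toK R K J := toK_mem (Ideal.subset_span (by simp))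
    have hbJ : algebraMap R K b ∈ toK R K J := toK_mem (Ideal.subset_span (by simp))
    have hz' := Submodule.mem_div_iff_forall_mul_mem.mp hz
    have hsa : algebraMap R K a * z ∈ (1 : Submodule R K) := by
      rw [mul_comm]; exact hz' _ haJ
    have hsb : algebraMap R K b * z ∈ (1 : Submodule R K) := by
      rw [mul_comm]; exact hz' _ hbJ
    obtain ⟨t, ht⟩ := mem_one_iff.mp hsa
    obtain ⟨s, hs⟩ := mem_one_iff.mp hsb
    have hsM : s ∉ M := by
      intro h
      exact hzM (hs ▸ toK_mem h)
    left
    refine ⟨s, t, hsM, algK_inj (R := R) (K := K) ?_⟩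
    rw [map_mul, map_mul, hs, ht]
    ring

lemma loc_principal (hR : IsPVMD R K) {M : Ideal R} (hM : M.IsPrime) (hMt : IsTIdeal K M)
    {G : Ideal R} (hG : G.FG) :
    ∃ g ∈ G, ∀ w ∈ G, ∃ s r : R, s ∉ M ∧ s * w = g * r := by
  have h1M : (1 : R) ∉ M := fun h => hM.ne_top ((Ideal.eq_top_iff_one M).mpr h)
  refine Submodule.fg_induction
    (motive := fun N _ => ∃ g ∈ N, ∀ w ∈ N, ∃ s r : R, s ∉ M ∧ s * w = g * r) ?_ ?_ G hG
  · intro x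
    refine ⟨x, Submodule.mem_span_singleton_self x, ?_⟩
    intro w hw
    obtain ⟨c, rfl⟩ := Ideal.mem_span_singleton'.mp hw
    exact ⟨1, c, h1M, by ring⟩
  · intro N₁ N₂ _ _ ⟨g₁, hg₁, h₁⟩ ⟨g₂, hg₂, h₂⟩
    rcases compare_at hR hM hMt g₁ g₂ with ⟨s, r, hsM, hsr⟩ | ⟨s, r, hsM, hsr⟩
    · -- s * g₁ = g₂ * r : g₂ divides g₁ locally; use g₂
      refine ⟨g₂, Submodule.mem_sup_right hg₂, ?_⟩
      intro w hw
      obtain ⟨w₁, hw₁, w₂, hw₂, rfl⟩ := Submodule.mem_sup.mp hw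
      obtain ⟨s₁, r₁, hs₁, e₁⟩ := h₁ w₁ hw₁
      obtain ⟨s₂, r₂, hs₂, e₂⟩ := h₂ w₂ hw₂
      refine ⟨s * s₁ * s₂, s₂ * r₁ * r + s * s₁ * r₂, ?_, ?_⟩
      · intro h
        rcases hM.mem_or_mem h with h' | h'
        · rcases hM.mem_or_mem h' with h'' | h''
          · exact hsM h''
          · exact hs₁ h''
        · exact hs₂ h'
      · have e3 : s * s₁ * s₂ * (w₁ + w₂) = s * s₂ * (s₁ * w₁) + s * s₁ * (s₂ * w₂) := by
          ring
        rw [e3, e₁, e₂]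
        have e4 : s * s₂ * (g₁ * r₁) + s * s₁ * (g₂ * r₂) =
            s₂ * r₁ * (s * g₁) + s * s₁ * (g₂ * r₂) := by ring
        rw [e4, hsr]
        ring
    · refine ⟨g₁, Submodule.mem_sup_left hg₁, ?_⟩
      intro w hw
      obtain ⟨w₁, hw₁, w₂, hw₂, rfl⟩ := Submodule.mem_sup.mp hw
      obtain ⟨s₁, r₁, hs₁, e₁⟩ := h₁ w₁ hw₁
      obtain ⟨s₂, r₂, hs₂, e₂⟩ := h₂ w₂ hw₂
      refine ⟨s * s₁ * s₂, s * s₂ * r₁ + s₁ * r₂ * r, ?_, ?_⟩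
      · intro h
        rcases hM.mem_or_mem h with h' | h'
        · rcases hM.mem_or_mem h' with h'' | h''
          · exact hsM h''
          · exact hs₁ h''
        · exact hs₂ h'
      · have e3 : s * s₁ * s₂ * (w₁ + w₂) = s * s₂ * (s₁ * w₁) + s * s₁ * (s₂ * w₂) := by
          ring
        rw [e3, e₁, e₂]
        have e4 : s * s₂ * (g₁ * r₁) + s * s₁ * (g₂ * r₂) =
            s * s₂ * (g₁ * r₁) + s₁ * r₂ * (s * g₂) := by ring
        rw [e4, hsr]
        ring

lemma loc_principal_pow {M : Ideal R} (hM : M.IsPrime) {G : Ideal R} {g : R}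
    (hg : ∀ w ∈ G, ∃ s r : R, s ∉ M ∧ s * w = g * r) :
    ∀ n : ℕ, ∀ x ∈ G ^ n, ∃ s r : R, s ∉ M ∧ s * x = g ^ n * r := by
  have h1M : (1 : R) ∉ M := fun h => hM.ne_top ((Ideal.eq_top_iff_one M).mpr h)
  intro n
  induction n with
  | zero =>
    intro x _
    exact ⟨1, x, h1M, by simp⟩
  | succ n ih =>
    intro x hx
    rw [pow_succ] at hx
    refine Submodule.mul_induction_on hx ?_ ?_
    · intro y hy w hw
      obtain ⟨s₁, r₁, hs₁, e₁⟩ := ih y hy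
      obtain ⟨s₂, r₂, hs₂, e₂⟩ := hg w hw
      refine ⟨s₁ * s₂, r₁ * r₂, ?_, ?_⟩
      · intro h
        rcases hM.mem_or_mem h with h' | h'
        · exact hs₁ h'
        · exact hs₂ h'
      · have : s₁ * s₂ * (y * w) = (s₁ * y) * (s₂ * w) := by ring
        rw [this, e₁, e₂, pow_succ]
        ring
    · rintro x₁ x₂ ⟨s₁, r₁, hs₁, e₁⟩ ⟨s₂, r₂, hs₂, e₂⟩
      refine ⟨s₁ * s₂, s₂ * r₁ + s₁ * r₂, ?_, ?_⟩
      · intro h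
        rcases hM.mem_or_mem h with h' | h'
        · exact hs₁ h'
        · exact hs₂ h'
      · have : s₁ * s₂ * (x₁ + x₂) = s₂ * (s₁ * x₁) + s₁ * (s₂ * x₂) := by ring
        rw [this, e₁, e₂]
        ring

/-! ### From a Noetherian t-spectrum -/

lemma exists_fg_radical (hN : TSpecNoetherian R K) {P : Ideal R} (hP : P.IsPrime)
    (hPt : IsTIdeal K P) :
    ∃ H : Ideal R, H.FG ∧ H ≤ P ∧ (tCl K H).radical = P := by
  by_contra hcon
  push_neg at hcon
  have step : ∀ H : Ideal R, H.FG → H ≤ P → ∃ x, x ∈ P ∧ x ∉ (tCl K H).radical := by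
    intro H hfg hle
    have h1 : (tCl K H).radical ≤ P := by
      have h2 : tCl K H ≤ P := tCl_le_of_le hPt hle
      calc (tCl K H).radical ≤ P.radical := Ideal.radical_mono h2
        _ = P := hP.radical
    rcases lt_or_eq_of_le h1 with hlt | heq
    · obtain ⟨x, hx1, hx2⟩ := SetLike.exists_of_lt hlt
      exact ⟨x, hx1, hx2⟩
    · exact absurd heq (hcon H hfg hle)
  classical
  let T := {H : Ideal R // H.FG ∧ H ≤ P}
  let pick : T → R := fun H => (step H.1 H.2.1 H.2.2).choose
  have hpick1 : ∀ H : T, pick H ∈ P := fun H => (step H.1 H.2.1 H.2.2).choose_spec.1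
  have hpick2 : ∀ H : T, pick H ∉ (tCl K H.1).radical :=
    fun H => (step H.1 H.2.1 H.2.2).choose_spec.2
  let succF : T → T := fun H => ⟨H.1 ⊔ Ideal.span {pick H},
    Submodule.FG.sup H.2.1 (Submodule.fg_span_singleton _),
    sup_le H.2.2 ((Ideal.span_singleton_le_iff_mem P).mpr (hpick1 H))⟩
  let g : ℕ → T := fun n => Nat.rec ⟨⊥, Submodule.fg_bot, bot_le⟩ (fun _ H => succF H) n
  have hg : ∀ n, g (n + 1) = succF (g n) := fun n => rfl
  have gmono : Monotone fun n => (g n).1 := by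
    apply monotone_nat_of_le_succ
    intro n
    rw [hg]
    exact le_sup_left
  let f : ℕ →o Ideal R := ⟨fun n => (tCl K (g n).1).radical,
    fun n m hnm => Ideal.radical_mono (tCl_mono (gmono hnm))⟩
  obtain ⟨n₀, hn₀⟩ := hN f (fun n => ⟨isT_radical (tCl_isT _), Ideal.radical_idem _⟩)
  have hx1 : pick (g n₀) ∈ f (n₀ + 1) := by
    show pick (g n₀) ∈ (tCl K (g (n₀ + 1)).1).radical
    apply Ideal.le_radical
    apply le_tCl (K := K) _
    rw [hg]
    exact le_sup_right (a := (g n₀).1) (Ideal.mem_span_singleton_self _)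
  rw [hn₀ (n₀ + 1) (by omega)] at hx1
  exact hpick2 (g n₀) hx1

end Helpers

section Statements

variable {R : Type*} [CommRing R] [IsDomain R]
variable {K : Type*} [Field K] [Algebra R K] [IsFractionRing R K]

/-- Let `R` be a PVMD with `Spec_t(R)` Noetherian and `I` a `t`-ideal
of `R`. If `I` is primary but not prime, then `I⁻¹` is not a subring of `K`. -/
theorem statement_10 (hR : IsPVMD R K) (hN : TSpecNoetherian R K)
    (I : Ideal R) (hbot : I ≠ ⊥) (htop : I ≠ ⊤) (htI : IsTIdeal K I)
    (hprim : I.IsPrimary) (hnp : ¬ I.IsPrime) :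
    ¬ IsSubringOf (dual (toK R K I)) := by
  intro hsub
  obtain ⟨hone, hmul⟩ := hsub
  classical
  set P : Ideal R := I.radical with hP
  have hPprime : P.IsPrime := Ideal.isPrime_radical hprim
  have hIP : I ≤ P := Ideal.le_radical
  have hInP : I ≠ P := by
    intro h
    apply hnp
    constructor
    · exact (Ideal.isPrimary_iff.mp hprim).1
    · intro x y hxy
      rcases (Ideal.isPrimary_iff.mp hprim).2 hxy with h1 | h1
      · exact Or.inl h1
      · right
        have : I.radical = I := by rw [← hP, ← h]
        rwa [this] at h1
  obtain ⟨c, hcP, hcI⟩ := SetLike.exists_of_lt (lt_of_le_of_ne hIP hInP)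
  have hc0 : c ≠ 0 := fun h => hcI (h ▸ I.zero_mem)
  have hPt : IsTIdeal K P := isT_radical htI
  obtain ⟨H, hHfg, hHP, hHrad⟩ := exists_fg_radical hN hPprime hPt
  set G : Ideal R := H ⊔ Ideal.span {c} with hG
  have hGfg : G.FG := Submodule.FG.sup hHfg (Submodule.fg_span_singleton _)
  have hGP : G ≤ P := sup_le hHP ((Ideal.span_singleton_le_iff_mem P).mpr hcP)
  have hcG : c ∈ G := le_sup_right (a := H) (Ideal.mem_span_singleton_self c)
  have hGrad : (tCl K G).radical = P := by
    apply le_antisymm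
    · calc (tCl K G).radical ≤ P.radical := Ideal.radical_mono (tCl_le_of_le hPt hGP)
        _ = P := hPprime.radical
    · rw [← hHrad]
      exact Ideal.radical_mono (tCl_mono le_sup_left)
  have hex : ∃ k : ℕ, tOp (toK R K (G ^ k)) ≤ toK R K I := by
    obtain ⟨N₀, hN₀⟩ := Ideal.exists_pow_le_of_le_radical_of_fg (le_of_le_of_eq hGP hP) hGfg
    exact ⟨N₀, le_trans (tOp_mono (toK_mono hN₀)) (le_of_eq htI)⟩
  set n : ℕ := Nat.find hex with hn
  have hnS : tOp (toK R K (G ^ n)) ≤ toK R K I := Nat.find_spec hex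
  have hmin : ∀ k, k < n → ¬ tOp (toK R K (G ^ k)) ≤ toK R K I :=
    fun k hk => Nat.find_min hex hk
  have h2n : 2 ≤ n := by
    by_contra hlt
    have : n = 0 ∨ n = 1 := by omega
    rcases this with h0 | h1
    · rw [h0] at hnS
      rw [pow_zero, Ideal.one_eq_top, toK_top, tOp_one] at hnS
      exact htop (one_mem_toK_iff.mp (hnS (Submodule.one_le.mp le_rfl)))
    · rw [h1, pow_one] at hnS
      have hcmem : algebraMap R K c ∈ toK R K I := hnS (le_tOp _ (toK_mem hcG))
      obtain ⟨d, hd, hde⟩ := mem_toK.mp hcmem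
      exact hcI (by rwa [← algK_inj hde])
  set Gm : Ideal R := G ^ (n - 1) with hGm
  have hGmfg : Gm.FG := Submodule.FG.pow hGfg _
  have hGmb : Gm ≠ ⊥ := by
    intro h
    have hcpow : c ^ (n - 1) ∈ Gm := Ideal.pow_mem_pow hcG _
    rw [h] at hcpow
    exact pow_ne_zero _ hc0 (by simpa using hcpow)
  have hGmnotI : ¬ tOp (toK R K Gm) ≤ toK R K I := hmin (n - 1) (by omega)
  have hinv := hR Gm hGmb hGmfg
  have claimZ : ∀ z ∈ dual (toK R K Gm), ∀ i ∈ I,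
      z * algebraMap R K i ∈ (1 : Submodule R K) := by
    intro z hz i hi
    set x : K := z * algebraMap R K i with hx
    by_cases hD : multIn (R := R) K x = ⊤
    · have h1 : (1 : R) ∈ multIn (R := R) K x := (Ideal.eq_top_iff_one _).mp hD
      rw [mem_multIn, map_one, one_mul] at h1
      exact h1
    obtain ⟨M, hDM, hMtop, hMt, hMprime⟩ := exists_tmax (multIn_isT x) hD
    exfalso
    obtain ⟨gM, hgM, hloc⟩ := loc_principal hR hMprime hMt hGmfg
    have hdualmem : ∀ y ∈ Gm, algebraMap R K y * z ∈ (1 : Submodule R K) := by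
      intro y hy
      rw [mul_comm]
      exact Submodule.mem_div_iff_forall_mul_mem.mp hz _ (toK_mem hy)
    have habs : ∀ s : R, s ∉ M → s * i ∈ Gm → False := by
      intro s hsM hsi
      apply hsM
      apply hDM
      rw [mem_multIn, hx]
      have e : algebraMap R K s * (z * algebraMap R K i) = algebraMap R K (s * i) * z := by
        rw [map_mul]; ring
      rw [e]
      exact hdualmem _ hsi
    by_cases hPM : P ≤ M
    · rcases compare_at hR hMprime hMt i gM with ⟨s, r, hsM, he⟩ | ⟨s, r, hsM, he⟩
      · refine habs s hsM ?_
        rw [he]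
        exact Ideal.mul_mem_right r Gm hgM
      · apply hGmnotI
        have hGmI : Gm ≤ I := by
          intro w hw
          obtain ⟨s', r', hs'M, he'⟩ := hloc w hw
          have hwI : w * (s * s') ∈ I := by
            have e : w * (s * s') = i * (r * r') := by
              calc w * (s * s') = s * (s' * w) := by ring
                _ = s * (gM * r') := by rw [he']
                _ = (s * gM) * r' := by ring
                _ = (i * r) * r' := by rw [he]
                _ = i * (r * r') := by ring
            rw [e]
            exact Ideal.mul_mem_right _ _ hi
          rcases (Ideal.isPrimary_iff.mp hprim).2 hwI with h1 | h1
          · exact h1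
          · exfalso
            have hss : s * s' ∈ M := hPM (le_of_eq hP.symm h1)
            rcases hMprime.mem_or_mem hss with h' | h'
            · exact hsM h'
            · exact hs'M h'
        exact le_trans (tOp_mono (toK_mono hGmI)) (le_of_eq htI)
    · have hGmM : ¬ Gm ≤ M := by
        intro hle
        apply hPM
        have hGM : G ≤ M := by
          intro y hy
          exact hMprime.mem_of_pow_mem _ (hle (Ideal.pow_mem_pow hy _))
        calc P = (tCl K G).radical := hGrad.symm
          _ ≤ M.radical := Ideal.radical_mono (tCl_le_of_le hMt hGM)
          _ = M := hMprime.radical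
      obtain ⟨w₁, hw₁Gm, hw₁M⟩ := SetLike.not_le_iff_exists.mp hGmM
      exact habs w₁ hw₁M (Ideal.mul_mem_right i Gm hw₁Gm)
  have hdualle : dual (toK R K Gm) ≤ dual (toK R K I) := by
    intro z hz
    have hmem : z ∈ (1 : Submodule R K) / toK R K I := by
      rw [Submodule.mem_div_iff_forall_mul_mem]
      intro y hy
      obtain ⟨i, hi, rfl⟩ := mem_toK.mp hy
      exact claimZ z hz i hi
    exact hmem
  have hXP : ¬ (toK R K Gm * dual (toK R K Gm) ≤ toK R K P) := by
    intro hle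
    have h1 : (1 : Submodule R K) ≤ toK R K P := by
      calc (1 : Submodule R K) = tOp (toK R K Gm * dual (toK R K Gm)) := hinv.symm
        _ ≤ tOp (toK R K P) := tOp_mono hle
        _ = toK R K P := hPt
    exact hPprime.ne_top (one_mem_toK_iff.mp (h1 (Submodule.one_le.mp le_rfl)))
  obtain ⟨u, huX, huP⟩ := SetLike.not_le_iff_exists.mp hXP
  have key : u ∈ toK R K P ∨ ∃ w : R, w ∈ Gm ∧ ∃ z ∈ dual (toK R K Gm),
      algebraMap R K w * z ∉ toK R K P := by
    refine Submodule.mul_induction_on huX ?_ ?_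
    · intro mm hm z hz
      obtain ⟨w, hw, rfl⟩ := mem_toK.mp hm
      by_cases h1 : algebraMap R K w * z ∈ toK R K P
      · exact Or.inl h1
      · exact Or.inr ⟨w, hw, z, hz, h1⟩
    · rintro u₁ u₂ (h1 | h1) (h2 | h2)
      · exact Or.inl (Submodule.add_mem _ h1 h2)
      · exact Or.inr h2
      · exact Or.inr h1
      · exact Or.inr h1
  rcases key with hu | ⟨w, hwGm, z, hz, hwzP⟩
  · exact huP hu
  have hwz1 : algebraMap R K w * z ∈ (1 : Submodule R K) := by
    rw [mul_comm]
    exact Submodule.mem_div_iff_forall_mul_mem.mp hz _ (toK_mem hwGm)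
  obtain ⟨q, hq⟩ := mem_one_iff.mp hwz1
  have hqP : q ∉ P := fun h => hwzP (hq ▸ toK_mem h)
  obtain ⟨g, hgG, hlocP⟩ := loc_principal hR hPprime hPt hGfg
  have hg0 : g ≠ 0 := by
    obtain ⟨s, r, hsP, he⟩ := hlocP c hcG
    intro h
    rw [h, zero_mul] at he
    rcases mul_eq_zero.mp he with h' | h'
    · exact hsP (h' ▸ P.zero_mem)
    · exact hc0 h'
  have hgP : g ∈ P := hGP hgG
  obtain ⟨N, hgN⟩ : ∃ N, g ^ N ∈ I := by
    have : g ∈ I.radical := le_of_eq hP hgP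
    exact Ideal.mem_radical_iff.mp this
  set m : ℕ := N + 1 with hm
  have hzI : z ∈ dual (toK R K I) := hdualle hz
  have hzm : ∀ k : ℕ, z ^ (k + 1) ∈ dual (toK R K I) := by
    intro k
    induction k with
    | zero => simpa using hzI
    | succ k ih => rw [pow_succ]; exact hmul _ ih _ hzI
  have hρ : z ^ m * algebraMap R K (g ^ N) ∈ (1 : Submodule R K) := by
    rw [hm]
    exact Submodule.mem_div_iff_forall_mul_mem.mp (hzm N) _ (toK_mem hgN)
  obtain ⟨ρ, hρe⟩ := mem_one_iff.mp hρ
  have hkey : q ^ m * g ^ N = w ^ m * ρ := by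
    apply algK_inj (R := R) (K := K)
    have hL : algebraMap R K (q ^ m * g ^ N) =
        (algebraMap R K w) ^ m * (z ^ m * algebraMap R K (g ^ N)) := by
      rw [map_mul, map_pow, hq, mul_pow]
      ring
    have hRr : algebraMap R K (w ^ m * ρ) =
        (algebraMap R K w) ^ m * (z ^ m * algebraMap R K (g ^ N)) := by
      rw [map_mul, map_pow, hρe]
    rw [hL, hRr]
  have hmemG : q ^ m * g ^ N ∈ G ^ ((n - 1) * m) := by
    rw [hkey]
    have hwm : w ^ m ∈ Gm ^ m := Ideal.pow_mem_pow hwGm m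
    rw [hGm, ← pow_mul] at hwm
    exact Ideal.mul_mem_right ρ _ hwm
  obtain ⟨s, r, hsP, hsr⟩ := loc_principal_pow hPprime hlocP ((n - 1) * m) _ hmemG
  have hle' : N + 1 ≤ (n - 1) * m := by
    have h1 : 1 * m ≤ (n - 1) * m := Nat.mul_le_mul_right m (by omega)
    omega
  set e : ℕ := (n - 1) * m - N with he
  have hee : (n - 1) * m = N + e := by omega
  have he1 : 1 ≤ e := by omega
  have hcancel : s * q ^ m = g ^ e * r := by
    have h2 : g ^ ((n - 1) * m) = g ^ N * g ^ e := by rw [← pow_add, ← hee]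
    have h3 : (s * q ^ m) * g ^ N = (g ^ e * r) * g ^ N := by
      calc (s * q ^ m) * g ^ N = s * (q ^ m * g ^ N) := by ring
        _ = g ^ ((n - 1) * m) * r := hsr
        _ = (g ^ N * g ^ e) * r := by rw [h2]
        _ = (g ^ e * r) * g ^ N := by ring
    exact mul_right_cancel₀ (pow_ne_zero N hg0) h3
  have hrhs : g ^ e * r ∈ P := by
    have he2 : e = (e - 1) + 1 := by omega
    have e3 : g ^ e * r = g * (g ^ (e - 1) * r) := by
      conv_lhs => rw [he2]
      rw [pow_succ]
      ring
    rw [e3]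
    exact P.mul_mem_right _ hgP
  rw [← hcancel] at hrhs
  rcases hPprime.mem_or_mem hrhs with h' | h'
  · exact hsP h'
  · exact hqP (hPprime.mem_of_pow_mem _ h')


end Statements

end

end PVMDPaper
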